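/- Let I be a nonempty proper subset of [n] that is nested and such that all four diagonals δ_1 = {a(I), b(I)}, δ_2 = {a(I), Γ}, δ_3 = {γ, b(I)}, δ_4 = {γ, Γ} are proper (i.e. D_I = {δ_1, δ_2, δ_3, δ_4}). Then the Minkowski coefficient satisfies y_I = ∑_{i=1}^{4} (−1)^{|I ∖ R_{δ_i}|} · w_{δ_i}. -/
import Mathlib


open Finset

attribute [local instance] Classical.propDecidable

namespace AssocPaper

/-- `x` and `y` are consecutive elements of the finite set `S`. -/
def ConsecIn (S : Finset ℕ) (x y : ℕ) : Prop :=
  x ∈ S ∧ y ∈ S ∧ x < y ∧ ∀ z ∈ S, ¬ (x < z ∧ z < y)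

/-- `D̄ = D ∪ {0, n+1}`. -/
def Dbar (n : ℕ) (D : Finset ℕ) : Finset ℕ := insert 0 (insert (n + 1) D)

/-- The boundary edges of the `c`-labeled `(n+2)`-gon, given by endpoints `x < y`:
pairs of consecutive elements of `D̄`; if `U ≠ ∅` also `{0, min U}`, `{max U, n+1}` and
pairs of consecutive elements of `U`; if `U = ∅` also `{0, n+1}`. -/
def IsBoundary (n : ℕ) (D U : Finset ℕ) (x y : ℕ) : Prop :=
  ConsecIn (Dbar n D) x y
    ∨ (U.Nonempty ∧
        ((x = 0 ∧ y ∈ U ∧ ∀ u ∈ U, y ≤ u)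
          ∨ (y = n + 1 ∧ x ∈ U ∧ ∀ u ∈ U, u ≤ x)
          ∨ ConsecIn U x y))
    ∨ (U = ∅ ∧ x = 0 ∧ y = n + 1)

/-- `{x, y}` (with `x < y ≤ n+1`) is a proper diagonal: a diagonal of the
`(n+2)`-gon which is not a boundary edge. -/
def IsProper (n : ℕ) (D U : Finset ℕ) (x y : ℕ) : Prop :=
  x < y ∧ y ≤ n + 1 ∧ ¬ IsBoundary n D U x y

/-- The set `R_δ` for a proper diagonal `δ = {x,y}` with `x < y`. -/
noncomputable def Rdiag (n : ℕ) (D U : Finset ℕ) (x y : ℕ) : Finset ℕ :=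
  if x ∈ U then
    (if y ∈ U then (D ∪ U.filter fun u => u ≤ x) ∪ U.filter fun u => y ≤ u
     else D.filter (fun d => d < y) ∪ U.filter fun u => u ≤ x)
  else
    (if y ∈ U then D.filter (fun d => x < d) ∪ U.filter fun u => y ≤ u
     else D.filter fun d => x < d ∧ d < y)

/-- The extension of `R` to non-proper and degenerate diagonals `δ = {x,y}`, `x ≤ y`:
`R_δ = [n]` if `U = ∅` and `δ = {0,n+1}`; for other non-proper or degenerate `δ`,
`R_δ = ∅` if `x,y ∈ D̄` and `R_δ = [n]` otherwise. -/
noncomputable def Rext (n : ℕ) (D U : Finset ℕ) (x y : ℕ) : Finset ℕ :=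
  if IsProper n D U x y then Rdiag n D U x y
  else if U = ∅ ∧ x = 0 ∧ y = n + 1 then Finset.Icc 1 n
  else if x ∈ U ∨ y ∈ U then Finset.Icc 1 n
  else ∅

/-- The extension of the right-hand sides `z_{R_δ}` to non-proper and degenerate
diagonals, given the values `w` on proper diagonals and the value `zn = z_{[n]}`. -/
noncomputable def zext (n : ℕ) (D U : Finset ℕ) (w : ℕ × ℕ → ℝ) (zn : ℝ) (x y : ℕ) : ℝ :=
  if IsProper n D U x y then w (x, y)
  else if U = ∅ ∧ x = 0 ∧ y = n + 1 then zn
  else if x ∈ U ∨ y ∈ U then zn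
  else 0

/-- `a(I)`: the largest element of `D ∪ {0}` smaller than `min I`. -/
noncomputable def aI (D I : Finset ℕ) : ℕ :=
  ((insert 0 D).filter fun e => ∀ i ∈ I, e < i).sup id

/-- `b(I)`: the smallest element of `D ∪ {n+1}` larger than `max I`. -/
noncomputable def bI (n : ℕ) (D I : Finset ℕ) : ℕ :=
  sInf {e : ℕ | e ∈ insert (n + 1) D ∧ ∀ i ∈ I, i < e}

/-- The minimum element `γ` of `I` (junk value for `I = ∅`). -/
noncomputable def minEl (I : Finset ℕ) : ℕ := sInf {i : ℕ | i ∈ I}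

/-- The maximum element `Γ` of `I` (junk value `0` for `I = ∅`). -/
noncomputable def maxEl (I : Finset ℕ) : ℕ := I.sup id

/-- A nonempty `I ⊆ [n]` is nested if every `d ∈ D` with `a(I) < d < b(I)` lies in `I`. -/
def IsNested (n : ℕ) (D I : Finset ℕ) : Prop :=
  I.Nonempty ∧ I ⊆ Finset.Icc 1 n ∧
    ∀ d ∈ D, aI D I < d → d < bI n D I → d ∈ I

/-- The nested components of `I`: the inclusion-maximal nested subsets of `I`. -/
noncomputable def nestedComponents (n : ℕ) (D I : Finset ℕ) : Finset (Finset ℕ) :=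
  I.powerset.filter fun J =>
    IsNested n D J ∧ ∀ K ∈ I.powerset, IsNested n D K → J ⊆ K → J = K

/-- `v(I)`: the number of nested components of `I`. -/
noncomputable def vI (n : ℕ) (D I : Finset ℕ) : ℕ := (nestedComponents n D I).card

/-- `x` is the last element of one of the up intervals of `J`
(an element of `J ∩ U` whose successor in `U`, if any, is not in `J`). -/
def IsRunEnd (U J : Finset ℕ) (x : ℕ) : Prop :=
  x ∈ J ∧ x ∈ U ∧ ∀ y, ConsecIn U x y → y ∉ J

/-- `y` is the first element of one of the up intervals of `J`
(an element of `J ∩ U` whose predecessor in `U`, if any, is not in `J`). -/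
def IsRunStart (U J : Finset ℕ) (y : ℕ) : Prop :=
  y ∈ J ∧ y ∈ U ∧ ∀ x, ConsecIn U x y → x ∉ J

/-- `{x,y}` is one of the diagonals `δ_1(J), …, δ_{w+1}(J)` associated to a nested
set `J` with `a = a(J)`, `b = b(J)` and up intervals `[α_1,β_1]_U, …, [α_w,β_w]_U`,
namely `{a,α_1}, {β_1,α_2}, …, {β_w,b}` (and `{a,b}` when `w = 0`). -/
def AssocDiag (n : ℕ) (D U J : Finset ℕ) (x y : ℕ) : Prop :=
  x < y ∧ (x = aI D J ∨ IsRunEnd U J x) ∧ (y = bI n D J ∨ IsRunStart U J y) ∧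
    ∀ u ∈ J ∩ U, ¬ (x < u ∧ u < y)

/-- `W(J)`: the proper diagonals among the diagonals associated to the nested set `J`. -/
noncomputable def WJ (n : ℕ) (D U J : Finset ℕ) : Finset (ℕ × ℕ) :=
  (Finset.range (n + 2) ×ˢ Finset.range (n + 2)).filter fun p =>
    AssocDiag n D U J p.1 p.2 ∧ IsProper n D U p.1 p.2

/-- The tight value `z^c_I = ∑_i ( ∑_{j ∈ W(J_i)} w_{δ_j(J_i)} − (|W(J_i)|−1)·z_{[n]} )`,
the sum running over the nested components `J_i` of `I` (so `z^c_∅ = 0`). -/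
noncomputable def zc (n : ℕ) (D U : Finset ℕ) (w : ℕ × ℕ → ℝ) (zn : ℝ) (I : Finset ℕ) : ℝ :=
  ∑ J ∈ nestedComponents n D I,
    ((∑ p ∈ WJ n D U J, w p) - (((WJ n D U J).card : ℝ) - 1) * zn)

/-- The Minkowski coefficient `y_I = ∑_{J ⊆ I} (−1)^{|I∖J|} z^c_J`. -/
noncomputable def yI (n : ℕ) (D U : Finset ℕ) (w : ℕ × ℕ → ℝ) (zn : ℝ) (I : Finset ℕ) : ℝ :=
  ∑ J ∈ I.powerset, (-1 : ℝ) ^ (I \ J).card * zc n D U w zn J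

/-- The associahedron right-hand sides `w_δ = |R_δ|·(|R_δ|+1)/2`. -/
noncomputable def wAs (n : ℕ) (D U : Finset ℕ) (p : ℕ × ℕ) : ℝ :=
  (((Rdiag n D U p.1 p.2).card : ℝ) * (((Rdiag n D U p.1 p.2).card : ℝ) + 1)) / 2

/-- The associahedron value `z_{[n]} = n(n+1)/2`. -/
noncomputable def znAs (n : ℕ) : ℝ := ((n : ℝ) * ((n : ℝ) + 1)) / 2


section Infra
variable {n : ℕ} {D U : Finset ℕ}

lemma aI_lt (D : Finset ℕ) {K : Finset ℕ} (hK : K ⊆ Finset.Icc 1 n) {i : ℕ} (hi : i ∈ K) :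
    aI D K < i := by
  have h1 : 1 ≤ i := (Finset.mem_Icc.mp (hK hi)).1
  unfold aI
  rw [Finset.sup_lt_iff (show (⊥:ℕ) < i by rw [Nat.bot_eq_zero]; omega)]
  intro e he
  exact (Finset.mem_filter.mp he).2 i hi

lemma aI_mem (D K : Finset ℕ) (hK : ∀ i ∈ K, 1 ≤ i) : aI D K ∈ insert 0 D := by
  have h0 : (0:ℕ) ∈ (insert 0 D).filter fun e => ∀ i ∈ K, e < i :=
    Finset.mem_filter.mpr ⟨Finset.mem_insert_self 0 D, fun i hi => by have := hK i hi; omega⟩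
  obtain ⟨e, he, heq⟩ := Finset.exists_mem_eq_sup _ ⟨0, h0⟩ (id : ℕ → ℕ)
  rw [aI, heq]
  exact (Finset.mem_filter.mp he).1

lemma le_aI {K : Finset ℕ} {e : ℕ} (he : e ∈ insert 0 D) (h : ∀ i ∈ K, e < i) :
    e ≤ aI D K :=
  Finset.le_sup (f := id) (Finset.mem_filter.mpr ⟨he, h⟩)

lemma bI_spec (D : Finset ℕ) (K : Finset ℕ) (hK : ∀ i ∈ K, i ≤ n) :
    bI n D K ∈ insert (n+1) D ∧ ∀ i ∈ K, i < bI n D K :=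
  Nat.sInf_mem (⟨n+1, by simp, fun i hi => by have := hK i hi; omega⟩ :
    Set.Nonempty {e : ℕ | e ∈ insert (n + 1) D ∧ ∀ i ∈ K, i < e})

lemma lt_bI (D : Finset ℕ) {K : Finset ℕ} (hK : ∀ i ∈ K, i ≤ n) {i : ℕ} (hi : i ∈ K) :
    i < bI n D K := (bI_spec D K hK).2 i hi

lemma bI_le {K : Finset ℕ} {e : ℕ} (he : e ∈ insert (n+1) D) (h : ∀ i ∈ K, i < e) :
    bI n D K ≤ e := Nat.sInf_le ⟨he, h⟩

lemma Icc_bounds {K : Finset ℕ} (hK : K ⊆ Finset.Icc 1 n) :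
    (∀ i ∈ K, 1 ≤ i) ∧ (∀ i ∈ K, i ≤ n) :=
  ⟨fun i hi => (Finset.mem_Icc.mp (hK hi)).1, fun i hi => (Finset.mem_Icc.mp (hK hi)).2⟩

lemma nested_insert {K : Finset ℕ} (hK : IsNested n D K) {j : ℕ}
    (hj : j ∈ Finset.Icc 1 n) (hja' : aI D K ≤ j) (hjb : j ≤ bI n D K) : IsNested n D (insert j K) := by
  obtain ⟨hne, hsub, hnest⟩ := hK
  have hsub' : insert j K ⊆ Finset.Icc 1 n := Finset.insert_subset hj hsub
  refine ⟨⟨j, Finset.mem_insert_self _ _⟩, hsub', ?_⟩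
  intro d hd hda hdb
  by_contra hdK'
  have hb1 := (Icc_bounds hsub').1
  have hb2 := (Icc_bounds hsub').2
  have hi0 : ∃ i0 ∈ insert j K, i0 ≤ d := by
    by_contra h
    push_neg at h
    have : d ≤ aI D (insert j K) := le_aI (Finset.mem_insert_of_mem hd) h
    omega
  have hi1 : ∃ i1 ∈ insert j K, d ≤ i1 := by
    by_contra h
    push_neg at h
    have : bI n D (insert j K) ≤ d := bI_le (Finset.mem_insert_of_mem hd) h
    omega
  obtain ⟨i0, hi0m, hi0le⟩ := hi0
  obtain ⟨i1, hi1m, hi1le⟩ := hi1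
  have hdj : d ≠ j := fun h => hdK' (h ▸ Finset.mem_insert_self _ _)
  have hmain : aI D K < d ∧ d < bI n D K := by
    constructor
    · rcases le_or_gt d (aI D K) with h|h
      · rcases Finset.mem_insert.mp hi0m with rfl|hK0
        · omega
        · have := aI_lt D hsub hK0; omega
      · exact h
    · rcases lt_or_ge d (bI n D K) with h|h
      · exact h
      · rcases Finset.mem_insert.mp hi1m with rfl|hK1
        · omega
        · have := lt_bI D (Icc_bounds hsub).2 hK1; omega
  exact hdK' (Finset.mem_insert_of_mem (hnest d hd hmain.1 hmain.2))

lemma mem_components_iff {J : Finset ℕ} (hJ : J ⊆ Finset.Icc 1 n) {K : Finset ℕ} :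
    K ∈ nestedComponents n D J ↔
      IsNested n D K ∧ K ⊆ J ∧ ∀ j ∈ J, aI D K ≤ j → j ≤ bI n D K → j ∈ K := by
  unfold nestedComponents
  simp only [Finset.mem_filter, Finset.mem_powerset]
  constructor
  · rintro ⟨hKJ, hKn, hmax⟩
    refine ⟨hKn, hKJ, ?_⟩
    intro j hj hja hjb
    have hK' : IsNested n D (insert j K) := nested_insert hKn (hJ hj) hja hjb
    have := hmax (insert j K) (Finset.insert_subset hj hKJ) hK' (Finset.subset_insert _ _)
    rw [this]
    exact Finset.mem_insert_self _ _
  · rintro ⟨hKn, hKJ, habs⟩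
    refine ⟨hKJ, hKn, ?_⟩
    intro K' hK'J hK'n hKK'
    apply Finset.Subset.antisymm hKK'
    intro j hjK'
    obtain ⟨i0, hi0⟩ := hKn.1
    have hKIcc := hKn.2.1
    have hK'Icc := hK'n.2.1
    have haj : aI D K ≤ j := by
      by_contra h
      push_neg at h
      have haD : aI D K ∈ D := by
        rcases Finset.mem_insert.mp (aI_mem D K (Icc_bounds hKIcc).1) with h0|hD
        · exfalso; have : 1 ≤ j := (Icc_bounds hK'Icc).1 j hjK'; omega
        · exact hD
      have h1 : aI D K' < aI D K := lt_trans (aI_lt D hK'Icc hjK') h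
      have h2 : aI D K < bI n D K' := by
        have ha := aI_lt D hKIcc hi0
        have hb := lt_bI D (Icc_bounds hK'Icc).2 (hKK' hi0)
        omega
      have haK' : aI D K ∈ K' := hK'n.2.2 _ haD h1 h2
      have : aI D K ∈ K := habs _ (hK'J haK') le_rfl
        (by have ha := aI_lt D hKIcc hi0; have hb := lt_bI D (Icc_bounds hKIcc).2 hi0; omega)
      exact absurd (aI_lt D hKIcc this) (lt_irrefl _)
    have hjb : j ≤ bI n D K := by
      by_contra h
      push_neg at h
      have hbD : bI n D K ∈ D := by
        rcases Finset.mem_insert.mp (bI_spec D K (Icc_bounds hKIcc).2).1 with h0|hD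
        · exfalso; have : j ≤ n := (Icc_bounds hK'Icc).2 j hjK'; omega
        · exact hD
      have h1 : aI D K' < bI n D K := by
        have ha := aI_lt D hK'Icc (hKK' hi0)
        have hb := lt_bI D (Icc_bounds hKIcc).2 hi0
        omega
      have h2 : bI n D K < bI n D K' := lt_of_lt_of_le h (le_of_lt (lt_bI D (Icc_bounds hK'Icc).2 hjK'))
      have hbK' : bI n D K ∈ K' := hK'n.2.2 _ hbD h1 h2
      have : bI n D K ∈ K := habs _ (hK'J hbK')
        (by have ha := aI_lt D hKIcc hi0; have hb := lt_bI D (Icc_bounds hKIcc).2 hi0; omega) le_rfl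
      exact absurd (lt_bI D (Icc_bounds hKIcc).2 this) (lt_irrefl _)
    exact habs j (hK'J hjK') haj hjb

end Infra

section Diag
variable {n : ℕ} {D U : Finset ℕ}

/-- Membership characterization of the associated diagonals of a nested set. -/
def Pred (D U : Finset ℕ) (x y : ℕ) (K : Finset ℕ) : Prop :=
  (∀ d ∈ D, x < d → d < y → d ∈ K) ∧ (x ∈ U → x ∈ K) ∧ (y ∈ U → y ∈ K) ∧
    (∀ u ∈ K, u ∈ U → ¬(x < u ∧ u < y)) ∧ (x ∈ D → x ∉ K) ∧ (y ∈ D → y ∉ K)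

lemma mem_D_or_U (hDU : D ∪ U = Finset.Icc 1 n) {i : ℕ} (h1 : 1 ≤ i) (h2 : i ≤ n) :
    i ∈ D ∨ i ∈ U := by
  have : i ∈ D ∪ U := by rw [hDU]; exact Finset.mem_Icc.mpr ⟨h1, h2⟩
  exact Finset.mem_union.mp this

lemma U_sub (hDU : D ∪ U = Finset.Icc 1 n) : U ⊆ Finset.Icc 1 n := by
  rw [← hDU]; exact Finset.subset_union_right

lemma D_sub (hDU : D ∪ U = Finset.Icc 1 n) : D ⊆ Finset.Icc 1 n := by
  rw [← hDU]; exact Finset.subset_union_left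

lemma boundary_consecD {x y : ℕ} (hx : x ∈ Dbar n D) (hy : y ∈ Dbar n D) (hxy : x < y)
    (hyn : y ≤ n + 1) (hno : ∀ d ∈ D, ¬(x < d ∧ d < y)) : IsBoundary n D U x y := by
  refine Or.inl ⟨hx, hy, hxy, fun z hz hcon => ?_⟩
  rcases Finset.mem_insert.mp hz with rfl|hz'
  · omega
  rcases Finset.mem_insert.mp hz' with rfl|hzD
  · omega
  · exact hno z hzD hcon

lemma aI_notMem_U (hDU : D ∪ U = Finset.Icc 1 n) (hdisj : Disjoint D U)
    {K : Finset ℕ} (hb1 : ∀ i ∈ K, 1 ≤ i) : aI D K ∉ U := by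
  intro hU
  rcases Finset.mem_insert.mp (aI_mem D K hb1) with h0|hD
  · have := Finset.mem_Icc.mp (U_sub hDU hU); omega
  · exact Finset.disjoint_left.mp hdisj hD hU

lemma bI_notMem_U (hDU : D ∪ U = Finset.Icc 1 n) (hdisj : Disjoint D U)
    {K : Finset ℕ} (hb2 : ∀ i ∈ K, i ≤ n) : bI n D K ∉ U := by
  intro hU
  rcases Finset.mem_insert.mp (bI_spec D K hb2).1 with h0|hD
  · have := Finset.mem_Icc.mp (U_sub hDU hU); omega
  · exact Finset.disjoint_left.mp hdisj hD hU

lemma assoc_to_pred (hDU : D ∪ U = Finset.Icc 1 n) (hdisj : Disjoint D U)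
    {K : Finset ℕ} (hK : IsNested n D K) {x y : ℕ}
    (h : AssocDiag n D U K x y) : Pred D U x y K := by
  obtain ⟨hxy, hxc, hyc, hno⟩ := h
  have hb1 := (Icc_bounds hK.2.1).1
  have hb2 := (Icc_bounds hK.2.1).2
  have hx_ge : aI D K ≤ x := by
    rcases hxc with rfl|hre
    · exact le_rfl
    · exact le_of_lt (aI_lt D hK.2.1 hre.1)
  have hy_le : y ≤ bI n D K := by
    rcases hyc with rfl|hrs
    · exact le_rfl
    · exact le_of_lt (lt_bI D hb2 hrs.1)
  refine ⟨?_, ?_, ?_, ?_, ?_, ?_⟩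
  · intro d hd hxd hdy
    exact hK.2.2 d hd (lt_of_le_of_lt hx_ge hxd) (lt_of_lt_of_le hdy hy_le)
  · intro hxU
    rcases hxc with rfl|hre
    · exact absurd hxU (aI_notMem_U hDU hdisj hb1)
    · exact hre.1
  · intro hyU
    rcases hyc with rfl|hrs
    · exact absurd hyU (bI_notMem_U hDU hdisj hb2)
    · exact hrs.1
  · intro u huK huU
    exact hno u (Finset.mem_inter.mpr ⟨huK, huU⟩)
  · intro hxD hxK
    rcases hxc with rfl|hre
    · exact absurd (aI_lt D hK.2.1 hxK) (lt_irrefl _)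
    · exact Finset.disjoint_left.mp hdisj hxD hre.2.1
  · intro hyD hyK
    rcases hyc with rfl|hrs
    · exact absurd (lt_bI D hb2 hyK) (lt_irrefl _)
    · exact Finset.disjoint_left.mp hdisj hyD hrs.2.1

lemma pred_to_assoc (hDU : D ∪ U = Finset.Icc 1 n) (hdisj : Disjoint D U)
    {K : Finset ℕ} (hK : IsNested n D K) {x y : ℕ}
    (hp : IsProper n D U x y) (hq : Pred D U x y K) : AssocDiag n D U K x y := by
  obtain ⟨hxy, hyn1, hnb⟩ := hp
  obtain ⟨hq1, hq2, hq3, hq4, hq5, hq6⟩ := hq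
  have hb1 := (Icc_bounds hK.2.1).1
  have hb2 := (Icc_bounds hK.2.1).2
  have hDbar : ∀ z, z = 0 ∨ z = n + 1 ∨ z ∈ D → z ∈ Dbar n D := by
    intro z hz
    unfold Dbar
    rcases hz with rfl|rfl|h
    · exact Finset.mem_insert_self _ _
    · exact Finset.mem_insert_of_mem (Finset.mem_insert_self _ _)
    · exact Finset.mem_insert_of_mem (Finset.mem_insert_of_mem h)
  -- y is beyond aI
  have h1 : aI D K < y := by
    by_contra hcon
    push_neg at hcon   -- y ≤ aI D K
    have haD : aI D K ∈ D := by
      rcases Finset.mem_insert.mp (aI_mem D K hb1) with h0|hD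
      · omega
      · exact hD
    have haN : aI D K ≤ n := (Finset.mem_Icc.mp (D_sub hDU haD)).2
    have hyU : y ∉ U := fun hU => by have := aI_lt D hK.2.1 (hq3 hU); omega
    have hxU : x ∉ U := fun hU => by have := aI_lt D hK.2.1 (hq2 hU); omega
    have hyDb : y ∈ Dbar n D := by
      apply hDbar
      rcases Nat.eq_or_lt_of_le hyn1 with h|h
      · right; left; exact h
      · right; right
        rcases mem_D_or_U (i := y) hDU (by omega) (by omega) with h'|h'
        · exact h'
        · exact absurd h' hyU
    have hxDb : x ∈ Dbar n D := by
      apply hDbar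
      rcases Nat.eq_zero_or_pos x with h|h
      · left; exact h
      · right; right
        rcases mem_D_or_U (i := x) hDU (by omega) (by omega) with h'|h'
        · exact h'
        · exact absurd h' hxU
    apply hnb
    apply boundary_consecD hxDb hyDb hxy hyn1
    intro d hd ⟨hxd, hdy⟩
    have : d ∈ K := hq1 d hd hxd hdy
    have := aI_lt D hK.2.1 this
    omega
  -- x is before bI
  have h2 : x < bI n D K := by
    by_contra hcon
    push_neg at hcon   -- bI ≤ x
    have hbD : bI n D K ∈ D := by
      rcases Finset.mem_insert.mp (bI_spec D K hb2).1 with h0|hD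
      · omega
      · exact hD
    have hbN : 1 ≤ bI n D K := (Finset.mem_Icc.mp (D_sub hDU hbD)).1
    have hxU : x ∉ U := fun hU => by have := lt_bI D hb2 (hq2 hU); omega
    have hyU : y ∉ U := fun hU => by have := lt_bI D hb2 (hq3 hU); omega
    have hxDb : x ∈ Dbar n D := by
      apply hDbar
      right; right
      rcases mem_D_or_U (i := x) hDU (by omega) (by omega) with h'|h'
      · exact h'
      · exact absurd h' hxU
    have hyDb : y ∈ Dbar n D := by
      apply hDbar
      rcases Nat.eq_or_lt_of_le hyn1 with h|h
      · right; left; exact h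
      · right; right
        rcases mem_D_or_U (i := y) hDU (by omega) (by omega) with h'|h'
        · exact h'
        · exact absurd h' hyU
    apply hnb
    apply boundary_consecD hxDb hyDb hxy hyn1
    intro d hd ⟨hxd, hdy⟩
    have : d ∈ K := hq1 d hd hxd hdy
    have := lt_bI D hb2 this
    omega
  refine ⟨hxy, ?_, ?_, ?_⟩
  · -- x = aI ∨ RunEnd
    by_cases hxU : x ∈ U
    · right
      refine ⟨hq2 hxU, hxU, ?_⟩
      intro y' hcons hy'K
      obtain ⟨_, hy'U, hxy', hnoU⟩ := hcons
      rcases lt_trichotomy y' y with hlt|rfl|hgt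
      · exact hq4 y' hy'K hy'U ⟨hxy', hlt⟩
      · exact hnb (Or.inr (Or.inl ⟨⟨x, hxU⟩, Or.inr (Or.inr ⟨hxU, hy'U, hxy, hnoU⟩)⟩))
      · by_cases hyU : y ∈ U
        · exact hnoU y hyU ⟨hxy, hgt⟩
        · have hy'n : y' ≤ n := hb2 y' hy'K
          have hyD : y ∈ D := by
            rcases mem_D_or_U (i := y) hDU (by omega) (by omega) with h'|h'
            · exact h'
            · exact absurd h' hyU
          have hyK : y ∈ K := by
            apply hK.2.2 y hyD
            · have := aI_lt D hK.2.1 (hq2 hxU); omega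
            · have := lt_bI D hb2 hy'K; omega
          exact hq6 hyD hyK
    · left
      rcases lt_trichotomy x (aI D K) with hlt|heq|hgt
      · exfalso
        have haD : aI D K ∈ D := by
          rcases Finset.mem_insert.mp (aI_mem D K hb1) with h0|hD
          · omega
          · exact hD
        have : aI D K ∈ K := hq1 _ haD hlt h1
        exact absurd (aI_lt D hK.2.1 this) (lt_irrefl _)
      · exact heq
      · exfalso
        have hxD : x ∈ D := by
          rcases mem_D_or_U (i := x) hDU (by omega) (by omega) with h'|h'
          · exact h'
          · exact absurd h' hxU
        exact hq5 hxD (hK.2.2 x hxD hgt h2)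
  · -- y = bI ∨ RunStart
    by_cases hyU : y ∈ U
    · right
      refine ⟨hq3 hyU, hyU, ?_⟩
      intro x' hcons hx'K
      obtain ⟨hx'U, _, hx'y, hnoU⟩ := hcons
      rcases lt_trichotomy x x' with hlt|rfl|hgt
      · exact hq4 x' hx'K hx'U ⟨hlt, hx'y⟩
      · exact hnb (Or.inr (Or.inl ⟨⟨y, hyU⟩, Or.inr (Or.inr ⟨hx'U, hyU, hxy, hnoU⟩)⟩))
      · by_cases hxU : x ∈ U
        · exact hnoU x hxU ⟨hgt, hxy⟩
        · have hx'1 : 1 ≤ x' := hb1 x' hx'K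
          have hxD : x ∈ D := by
            rcases mem_D_or_U (i := x) hDU (by omega) (by omega) with h'|h'
            · exact h'
            · exact absurd h' hxU
          have hxK : x ∈ K := by
            apply hK.2.2 x hxD
            · have := aI_lt D hK.2.1 hx'K; omega
            · have := lt_bI D hb2 (hq3 hyU); omega
          exact hq5 hxD hxK
    · left
      rcases lt_trichotomy y (bI n D K) with hlt|heq|hgt
      · exfalso
        have hbub : bI n D K ≤ n + 1 := bI_le (Finset.mem_insert_self _ _) (fun i hi => by have := hb2 i hi; omega)
        have hyD : y ∈ D := by
          rcases mem_D_or_U (i := y) hDU (by omega) (by omega) with h'|h'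
          · exact h'
          · exact absurd h' hyU
        exact hq6 hyD (hK.2.2 y hyD h1 hlt)
      · exact heq
      · exfalso
        have hbD : bI n D K ∈ D := by
          rcases Finset.mem_insert.mp (bI_spec D K hb2).1 with h0|hD
          · omega
          · exact hD
        have : bI n D K ∈ K := hq1 _ hbD h2 hgt
        exact absurd (lt_bI D hb2 this) (lt_irrefl _)
  · intro u hu
    exact hq4 u (Finset.mem_inter.mp hu).1 (Finset.mem_inter.mp hu).2

lemma WJ_eq (hDU : D ∪ U = Finset.Icc 1 n) (hdisj : Disjoint D U)
    {K : Finset ℕ} (hK : IsNested n D K) :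
    WJ n D U K = (Finset.range (n+2) ×ˢ Finset.range (n+2)).filter
      (fun p => Pred D U p.1 p.2 K ∧ IsProper n D U p.1 p.2) := by
  unfold WJ
  apply Finset.filter_congr
  intro p _
  constructor
  · rintro ⟨ha, hpr⟩
    exact ⟨assoc_to_pred hDU hdisj hK ha, hpr⟩
  · rintro ⟨hq, hpr⟩
    exact ⟨pred_to_assoc hDU hdisj hK hpr hq, hpr⟩

end Diag

section IntervalSum

lemma sum_neg_one_pow (S : Finset ℕ) :
    ∑ T ∈ S.powerset, (-1:ℝ)^T.card = if S = ∅ then 1 else 0 := by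
  have h := Finset.sum_powerset_neg_one_pow_card (x := S)
  have h2 : ((∑ T ∈ S.powerset, (-1:ℤ)^T.card : ℤ) : ℝ) = ∑ T ∈ S.powerset, (-1:ℝ)^T.card := by
    push_cast
    rfl
  rw [← h2, h]
  split <;> norm_num

lemma neg_one_pow_sub {m k : ℕ} (hk : k ≤ m) : (-1:ℝ)^(m - k) = (-1)^m * (-1)^k := by
  have h2 : (-1:ℝ)^k * (-1:ℝ)^k = 1 := by
    rw [← pow_add, ← two_mul, pow_mul]
    norm_num
  calc (-1:ℝ)^(m-k) = (-1)^(m-k) * ((-1)^k * (-1)^k) := by rw [h2, mul_one]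
    _ = ((-1)^(m-k) * (-1)^k) * (-1)^k := by ring
    _ = (-1)^m * (-1)^k := by rw [← pow_add, Nat.sub_add_cancel hk]

lemma interval_sum (I A B : Finset ℕ) (hA : A ⊆ I) (hB : B ⊆ I) :
    ∑ J ∈ I.powerset.filter (fun J => A ⊆ J ∧ Disjoint J B), (-1:ℝ)^((I \ J).card)
      = if A ∪ B = I ∧ Disjoint A B then (-1:ℝ)^B.card else 0 := by
  by_cases hd : Disjoint A B
  · have key : I.powerset.filter (fun J => A ⊆ J ∧ Disjoint J B)
        = (I \ (A ∪ B)).powerset.image (fun T => A ∪ T) := by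
      ext J
      simp only [Finset.mem_filter, Finset.mem_powerset, Finset.mem_image]
      constructor
      · rintro ⟨hJI, hAJ, hJB⟩
        refine ⟨J \ A, ?_, ?_⟩
        · intro j hj
          simp only [Finset.mem_sdiff, Finset.mem_union] at hj ⊢
          refine ⟨hJI hj.1, ?_⟩
          push_neg
          exact ⟨hj.2, Finset.disjoint_left.mp hJB hj.1⟩
        · rw [Finset.union_sdiff_self_eq_union, Finset.union_eq_right.mpr hAJ]
      · rintro ⟨T, hT, rfl⟩
        have hTsub : T ⊆ I \ (A ∪ B) := hT
        refine ⟨Finset.union_subset hA (hTsub.trans (Finset.sdiff_subset)), Finset.subset_union_left, ?_⟩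
        rw [Finset.disjoint_union_left]
        refine ⟨hd, Finset.disjoint_left.mpr ?_⟩
        intro x hx hxB
        have := Finset.mem_sdiff.mp (hTsub hx)
        simp only [Finset.mem_union] at this
        exact this.2 (Or.inr hxB)
    have hinj : ∀ T ∈ (I \ (A ∪ B)).powerset, ∀ T' ∈ (I \ (A ∪ B)).powerset,
        A ∪ T = A ∪ T' → T = T' := by
      intro T hT T' hT' h
      have hda : ∀ {X : Finset ℕ}, X ⊆ I \ (A ∪ B) → (A ∪ X) \ A = X := by
        intro X hX
        rw [Finset.union_sdiff_cancel_left (Finset.disjoint_left.mpr ?_)]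
        intro x hxA hxX
        have := Finset.mem_sdiff.mp (hX hxX)
        simp only [Finset.mem_union] at this
        exact this.2 (Or.inl hxA)
      rw [← hda (Finset.mem_powerset.mp hT), ← hda (Finset.mem_powerset.mp hT'), h]
    rw [key, Finset.sum_image hinj]
    have hstep : ∀ T ∈ (I \ (A ∪ B)).powerset,
        (-1:ℝ)^((I \ (A ∪ T)).card) = (-1:ℝ)^((I \ A).card) * (-1:ℝ)^T.card := by
      intro T hT
      have hTsub : T ⊆ I \ (A ∪ B) := Finset.mem_powerset.mp hT
      have hTIA : T ⊆ I \ A := hTsub.trans (Finset.sdiff_subset_sdiff le_rfl Finset.subset_union_left)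
      have h1 : I \ (A ∪ T) = (I \ A) \ T := by
        ext i
        simp only [Finset.mem_sdiff, Finset.mem_union]
        tauto
      rw [h1, Finset.card_sdiff_of_subset hTIA, neg_one_pow_sub (Finset.card_le_card hTIA)]
    rw [Finset.sum_congr rfl hstep, ← Finset.mul_sum, sum_neg_one_pow]
    by_cases hcond : A ∪ B = I
    · rw [if_pos, if_pos ⟨hcond, hd⟩, mul_one]
      · congr 2
        apply Finset.Subset.antisymm
        · intro i hi
          have hi' := Finset.mem_sdiff.mp hi
          have : i ∈ A ∪ B := hcond.symm ▸ hi'.1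
          rcases Finset.mem_union.mp this with h|h
          · exact absurd h hi'.2
          · exact h
        · intro i hi
          exact Finset.mem_sdiff.mpr ⟨hB hi, fun hA' => Finset.disjoint_left.mp hd hA' hi⟩
      · rw [Finset.sdiff_eq_empty_iff_subset, hcond]
    · rw [if_neg, if_neg (fun h => hcond h.1), mul_zero]
      intro h
      apply hcond
      apply Finset.Subset.antisymm (Finset.union_subset hA hB)
      intro i hi
      by_contra hcon
      have : i ∈ I \ (A ∪ B) := Finset.mem_sdiff.mpr ⟨hi, hcon⟩
      rw [h] at this
      exact absurd this (Finset.notMem_empty i)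
  · rw [if_neg (fun h => hd h.2)]
    rw [Finset.filter_false_of_mem, Finset.sum_empty]
    rintro J _ ⟨hAJ, hJB⟩
    exact hd (hJB.mono_left hAJ)

end IntervalSum

section Swap

lemma swap_sum {α β : Type*} [DecidableEq β] (sI : Finset α) (tI : Finset β) (S : α → Finset β)
    (hS : ∀ J ∈ sI, S J ⊆ tI) (c : α → ℝ) (g : β → ℝ) :
    ∑ J ∈ sI, c J * ∑ K ∈ S J, g K
      = ∑ K ∈ tI, (∑ J ∈ sI.filter (fun J => K ∈ S J), c J) * g K := by
  classical
  calc ∑ J ∈ sI, c J * ∑ K ∈ S J, g K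
      = ∑ J ∈ sI, ∑ K ∈ tI, (if K ∈ S J then c J * g K else 0) := by
        apply Finset.sum_congr rfl
        intro J hJ
        rw [Finset.sum_ite_mem, Finset.inter_eq_right.mpr (hS J hJ), Finset.mul_sum]
    _ = ∑ K ∈ tI, ∑ J ∈ sI, (if K ∈ S J then c J * g K else 0) := Finset.sum_comm
    _ = ∑ K ∈ tI, (∑ J ∈ sI.filter (fun J => K ∈ S J), c J) * g K := by
        apply Finset.sum_congr rfl
        intro K _
        rw [Finset.sum_filter, Finset.sum_mul]
        apply Finset.sum_congr rfl
        intro J _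
        rw [ite_mul, zero_mul]

end Swap


set_option maxHeartbeats 1600000 in
/-- if `I` is a nonempty proper nested subset of `[n]` such that all
four diagonals `δ_1 = {a,b}`, `δ_2 = {a,Γ}`, `δ_3 = {γ,b}`, `δ_4 = {γ,Γ}` are
proper, then `y_I = ∑_{i=1}^4 (−1)^{|I∖R_{δ_i}|} w_{δ_i}`. -/
theorem statement8 (n : ℕ) (D U : Finset ℕ) (hn : 2 ≤ n)
    (hDU : D ∪ U = Finset.Icc 1 n) (hdisj : Disjoint D U) (h1D : 1 ∈ D) (hnD : n ∈ D)
    (w : ℕ × ℕ → ℝ) (zn : ℝ)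
    (I : Finset ℕ) (hne : I.Nonempty) (hsub : I ⊆ Finset.Icc 1 n)
    (hpropersub : I ≠ Finset.Icc 1 n) (hnested : IsNested n D I)
    (h1 : IsProper n D U (aI D I) (bI n D I))
    (h2 : IsProper n D U (aI D I) (maxEl I))
    (h3 : IsProper n D U (minEl I) (bI n D I))
    (h4 : IsProper n D U (minEl I) (maxEl I)) :
    yI n D U w zn I =
      (-1 : ℝ) ^ (I \ Rdiag n D U (aI D I) (bI n D I)).card * w (aI D I, bI n D I)
      + (-1 : ℝ) ^ (I \ Rdiag n D U (aI D I) (maxEl I)).card * w (aI D I, maxEl I)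
      + (-1 : ℝ) ^ (I \ Rdiag n D U (minEl I) (bI n D I)).card * w (minEl I, bI n D I)
      + (-1 : ℝ) ^ (I \ Rdiag n D U (minEl I) (maxEl I)).card * w (minEl I, maxEl I) := by
  set a := aI D I with ha_def
  set b := bI n D I with hb_def
  set γ := minEl I with hγ_def
  set Γ := maxEl I with hΓ_def
  have hIcc1 : ∀ i ∈ I, 1 ≤ i := (Icc_bounds hsub).1
  have hIccn : ∀ i ∈ I, i ≤ n := (Icc_bounds hsub).2
  have hγI : γ ∈ I := by
    have : minEl I ∈ {i : ℕ | i ∈ I} := Nat.sInf_mem ⟨hne.choose, hne.choose_spec⟩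
    exact this
  have hγle : ∀ i ∈ I, γ ≤ i := fun i hi => Nat.sInf_le hi
  have hΓI : Γ ∈ I := by
    obtain ⟨i, hi, heq⟩ := Finset.exists_mem_eq_sup I hne (id : ℕ → ℕ)
    have : Γ = i := heq
    rw [this]
    exact hi
  have hleΓ : ∀ i ∈ I, i ≤ Γ := fun i hi => Finset.le_sup (f := id) hi
  have ha_lt : ∀ i ∈ I, a < i := fun i hi => aI_lt D hsub hi
  have hlt_b : ∀ i ∈ I, i < b := fun i hi => lt_bI D hIccn hi
  have hγΓ : γ < Γ := h4.1
  have haγ : a < γ := ha_lt γ hγI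
  have hΓb : Γ < b := hlt_b Γ hΓI
  have hγn : γ ≤ n := hIccn γ hγI
  have hγ1 : 1 ≤ γ := hIcc1 γ hγI
  have hΓn : Γ ≤ n := hIccn Γ hΓI
  have hbn1 : b ≤ n + 1 := h1.2.1
  have han : a ≤ n := by omega
  have hnst : ∀ d ∈ D, a < d → d < b → d ∈ I := hnested.2.2
  have hdisj' : ∀ {i : ℕ}, i ∈ D → i ∈ U → False := fun hD hU => Finset.disjoint_left.mp hdisj hD hU
  have hDorU : ∀ i ∈ I, i ∈ D ∨ i ∈ U := fun i hi =>
    mem_D_or_U hDU (hIcc1 i hi) (hIccn i hi)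
  have haU : a ∉ U := aI_notMem_U hDU hdisj hIcc1
  have hbU : b ∉ U := bI_notMem_U hDU hdisj hIccn
  have haDbar : a ∈ Dbar n D := by
    rcases Finset.mem_insert.mp (aI_mem D I hIcc1) with h|h
    · rw [ha_def, h]; exact Finset.mem_insert_self _ _
    · exact Finset.mem_insert_of_mem (Finset.mem_insert_of_mem h)
  have hbDbar : b ∈ Dbar n D := by
    rcases Finset.mem_insert.mp (bI_spec D I hIccn).1 with h|h
    · rw [hb_def, h]; exact Finset.mem_insert_of_mem (Finset.mem_insert_self _ _)
    · exact Finset.mem_insert_of_mem (Finset.mem_insert_of_mem h)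
  have hDbarD : ∀ z ∈ D, z ∈ Dbar n D := fun z hz =>
    Finset.mem_insert_of_mem (Finset.mem_insert_of_mem hz)
  set M := I.filter (fun i => i ∈ D ∧ i ≠ γ ∧ i ≠ Γ) with hM_def
  set Bf := fun (q : ℕ × ℕ) => I.filter (fun i => (i ∈ U ∧ q.1 < i ∧ i < q.2) ∨ (i ∈ D ∧ (i = q.1 ∨ i = q.2))) with hBf_def
  set Af := fun (q : ℕ × ℕ) => I.filter (fun i => (i ∈ D ∧ q.1 < i ∧ i < q.2) ∨ (i ∈ U ∧ (i = q.1 ∨ i = q.2))) with hAf_def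
  -- the middle down-elements are nonempty
  have hMne : M.Nonempty := by
    by_contra hM
    have hM' : ∀ i ∈ I, i ∈ D → i = γ ∨ i = Γ := by
      intro i hi hiD
      by_contra hcon
      push_neg at hcon
      exact hM ⟨i, Finset.mem_filter.mpr ⟨hi, hiD, hcon.1, hcon.2⟩⟩
    rcases hDorU γ hγI with hγD|hγU <;> rcases hDorU Γ hΓI with hΓD|hΓU
    · apply h4.2.2
      apply boundary_consecD (hDbarD γ hγD) (hDbarD Γ hΓD) hγΓ (by omega)
      intro d hd ⟨hd1, hd2⟩
      have hdI : d ∈ I := hnst d hd (by omega) (by omega)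
      rcases hM' d hdI hd with rfl|rfl <;> omega
    · apply h3.2.2
      apply boundary_consecD (hDbarD γ hγD) hbDbar (by omega) (by omega)
      intro d hd ⟨hd1, hd2⟩
      have hdI : d ∈ I := hnst d hd (by omega) (by omega)
      rcases hM' d hdI hd with rfl|rfl
      · omega
      · exact hdisj' hd hΓU
    · apply h2.2.2
      apply boundary_consecD haDbar (hDbarD Γ hΓD) (by omega) (by omega)
      intro d hd ⟨hd1, hd2⟩
      have hdI : d ∈ I := hnst d hd (by omega) (by omega)
      rcases hM' d hdI hd with rfl|rfl
      · exact hdisj' hd hγU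
      · omega
    · apply h1.2.2
      apply boundary_consecD haDbar hbDbar (by omega) (by omega)
      intro d hd ⟨hd1, hd2⟩
      have hdI : d ∈ I := hnst d hd (by omega) (by omega)
      rcases hM' d hdI hd with rfl|rfl
      · exact hdisj' hd hγU
      · exact hdisj' hd hΓU
  -- characterization of the relevant K family
  have hFeq : I.powerset.filter (fun K => IsNested n D K ∧ ∀ i ∈ I, aI D K ≤ i ∧ i ≤ bI n D K)
      = I.powerset.filter (fun K => M ⊆ K) := by
    apply Finset.filter_congr
    intro K hK
    have hKI : K ⊆ I := Finset.mem_powerset.mp hK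
    have hsubK : K ⊆ Finset.Icc 1 n := hKI.trans hsub
    constructor
    · rintro ⟨hKn, hcond⟩
      intro d hd
      obtain ⟨hdI, hdD, hdγ, hdΓ⟩ := Finset.mem_filter.mp hd
      have h1' := (hcond γ hγI).1
      have h2' := (hcond Γ hΓI).2
      have hγd : γ ≤ d := hγle d hdI
      have hdΓ'' : d ≤ Γ := hleΓ d hdI
      exact hKn.2.2 d hdD (by omega) (by omega)
    · intro hMK
      obtain ⟨m0, hm0⟩ := hMne
      obtain ⟨hm0I, hm0D, hm0γ, hm0Γ⟩ := Finset.mem_filter.mp hm0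
      have hm0K : m0 ∈ K := hMK hm0
      have hγm0 : γ < m0 := lt_of_le_of_ne (hγle m0 hm0I) (Ne.symm hm0γ)
      have hm0Γ' : m0 < Γ := lt_of_le_of_ne (hleΓ m0 hm0I) hm0Γ
      have hb1K := (Icc_bounds hsubK).1
      have hb2K := (Icc_bounds hsubK).2
      have haK_le : aI D K ≤ γ := by
        by_contra hcon
        push_neg at hcon
        have haKD : aI D K ∈ D := by
          rcases Finset.mem_insert.mp (aI_mem D K hb1K) with h|h
          · omega
          · exact h
        have haKm0 : aI D K < m0 := aI_lt D hsubK hm0K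
        have hm0b : m0 < b := hlt_b m0 hm0I
        have haKI : aI D K ∈ I := hnst _ haKD (by omega) (by omega)
        have hm0Γ'' : m0 ≤ Γ := hleΓ m0 hm0I
        have : aI D K ∈ M := Finset.mem_filter.mpr ⟨haKI, haKD, by omega, by omega⟩
        exact absurd (aI_lt D hsubK (hMK this)) (lt_irrefl _)
      have hbK_ge : Γ ≤ bI n D K := by
        by_contra hcon
        push_neg at hcon
        have hbKD : bI n D K ∈ D := by
          rcases Finset.mem_insert.mp (bI_spec D K hb2K).1 with h|h
          · omega
          · exact h
        have hm0bK : m0 < bI n D K := lt_bI D hb2K hm0K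
        have ham0 : a < m0 := ha_lt m0 hm0I
        have hbKI : bI n D K ∈ I := hnst _ hbKD (by omega) (by omega)
        have : bI n D K ∈ M := Finset.mem_filter.mpr ⟨hbKI, hbKD, by omega, by omega⟩
        exact absurd (lt_bI D hb2K (hMK this)) (lt_irrefl _)
      refine ⟨⟨⟨m0, hm0K⟩, hsubK, ?_⟩, ?_⟩
      · intro d hd hda hdb
        have haK_ge : a ≤ aI D K := le_aI (aI_mem D I hIcc1) (fun i hi => ha_lt i (hKI hi))
        have hbK_le : bI n D K ≤ b := bI_le (bI_spec D I hIccn).1 (fun i hi => hlt_b i (hKI hi))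
        have hdI : d ∈ I := hnst d hd (by omega) (by omega)
        by_cases hdγ : d = γ
        · by_contra hdK
          have hlt : ∀ i ∈ K, d < i := by
            intro i hi
            have hh1 := hγle i (hKI hi)
            have hh2 : i ≠ d := fun h => hdK (h ▸ hi)
            omega
          have : d ≤ aI D K := le_aI (Finset.mem_insert_of_mem hd) hlt
          omega
        · by_cases hdΓ : d = Γ
          · by_contra hdK
            have hlt : ∀ i ∈ K, i < d := by
              intro i hi
              have hh1 := hleΓ i (hKI hi)
              have hh2 : i ≠ d := fun h => hdK (h ▸ hi)
              omega
            have : bI n D K ≤ d := bI_le (Finset.mem_insert_of_mem hd) hlt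
            omega
          · exact hMK (Finset.mem_filter.mpr ⟨hdI, hd, hdγ, hdΓ⟩)
      · intro i hi
        exact ⟨le_trans haK_le (hγle i hi), le_trans (hleΓ i hi) hbK_ge⟩
  -- step D : inner alternating sum over J for fixed K
  have stepD : ∀ K ∈ I.powerset,
      (∑ J ∈ I.powerset.filter (fun J => K ∈ nestedComponents n D J), (-1:ℝ)^((I \ J).card))
        = if IsNested n D K ∧ ∀ i ∈ I, aI D K ≤ i ∧ i ≤ bI n D K
          then (-1:ℝ)^((I \ K).card) else 0 := by
    intro K hK
    have hKI : K ⊆ I := Finset.mem_powerset.mp hK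
    by_cases hKn : IsNested n D K
    · set SK := (I ∩ Finset.Icc (aI D K) (bI n D K)) \ K with hSK_def
      have hSKI : SK ⊆ I := (Finset.sdiff_subset).trans Finset.inter_subset_left
      have hfeq : I.powerset.filter (fun J => K ∈ nestedComponents n D J)
          = I.powerset.filter (fun J => K ⊆ J ∧ Disjoint J SK) := by
        apply Finset.filter_congr
        intro J hJ
        have hJI : J ⊆ I := Finset.mem_powerset.mp hJ
        rw [mem_components_iff (hJI.trans hsub)]
        constructor
        · rintro ⟨_, hKJ, h3'⟩
          refine ⟨hKJ, Finset.disjoint_left.mpr ?_⟩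
          intro j hjJ hjS
          obtain ⟨hjI, hjK⟩ := Finset.mem_sdiff.mp hjS
          obtain ⟨hjI', hjIcc⟩ := Finset.mem_inter.mp hjI
          obtain ⟨hja, hjb⟩ := Finset.mem_Icc.mp hjIcc
          exact hjK (h3' j hjJ hja hjb)
        · rintro ⟨hKJ, hdisjJ⟩
          refine ⟨hKn, hKJ, ?_⟩
          intro j hjJ hja hjb
          by_contra hjK
          exact Finset.disjoint_left.mp hdisjJ hjJ
            (Finset.mem_sdiff.mpr ⟨Finset.mem_inter.mpr ⟨hJI hjJ, Finset.mem_Icc.mpr ⟨hja, hjb⟩⟩, hjK⟩)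
      rw [hfeq, interval_sum I K SK hKI hSKI]
      have hdisjKS : Disjoint K SK := (Finset.sdiff_disjoint).symm
      by_cases hcond : ∀ i ∈ I, aI D K ≤ i ∧ i ≤ bI n D K
      · have hunion : K ∪ SK = I := by
          apply Finset.Subset.antisymm (Finset.union_subset hKI hSKI)
          intro i hi
          by_cases hiK : i ∈ K
          · exact Finset.mem_union_left _ hiK
          · exact Finset.mem_union_right _
              (Finset.mem_sdiff.mpr ⟨Finset.mem_inter.mpr ⟨hi, Finset.mem_Icc.mpr (hcond i hi)⟩, hiK⟩)
        rw [if_pos ⟨hunion, hdisjKS⟩, if_pos ⟨hKn, hcond⟩]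
        have hSKeq : SK = I \ K := by
          ext i
          simp only [hSK_def, Finset.mem_sdiff, Finset.mem_inter, Finset.mem_Icc]
          constructor
          · rintro ⟨⟨hiI, _⟩, hiK⟩
            exact ⟨hiI, hiK⟩
          · rintro ⟨hiI, hiK⟩
            exact ⟨⟨hiI, hcond i hiI⟩, hiK⟩
        rw [hSKeq]
      · rw [if_neg, if_neg (fun h => hcond h.2)]
        rintro ⟨hu, -⟩
        apply hcond
        intro i hi
        have hmem : i ∈ K ∪ SK := hu.symm ▸ hi
        rcases Finset.mem_union.mp hmem with h|h
        · exact ⟨le_of_lt (aI_lt D (hKI.trans hsub) h),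
            le_of_lt (lt_bI D (Icc_bounds (hKI.trans hsub)).2 h)⟩
        · exact Finset.mem_Icc.mp (Finset.mem_inter.mp (Finset.mem_sdiff.mp h).1).2
    · rw [if_neg (fun h => hKn h.1), Finset.filter_false_of_mem, Finset.sum_empty]
      intro J hJ hcon
      exact hKn ((mem_components_iff ((Finset.mem_powerset.mp hJ).trans hsub)).mp hcon).1
  -- step E : Möbius sum reduces to the K family
  have stepE : yI n D U w zn I
      = ∑ K ∈ I.powerset.filter (fun K => M ⊆ K),
          (-1:ℝ)^((I \ K).card) *
            ((∑ p ∈ WJ n D U K, w p) - (((WJ n D U K).card : ℝ) - 1) * zn) := by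
    have hSsub : ∀ J ∈ I.powerset, nestedComponents n D J ⊆ I.powerset := by
      intro J hJ K hK
      exact Finset.mem_powerset.mpr
        ((Finset.mem_powerset.mp (Finset.mem_filter.mp hK).1).trans (Finset.mem_powerset.mp hJ))
    calc yI n D U w zn I
        = ∑ J ∈ I.powerset, (-1:ℝ)^((I \ J).card) *
            ∑ K ∈ nestedComponents n D J,
              ((∑ p ∈ WJ n D U K, w p) - (((WJ n D U K).card : ℝ) - 1) * zn) := by
          simp only [yI, zc]
      _ = ∑ K ∈ I.powerset,
            (∑ J ∈ I.powerset.filter (fun J => K ∈ nestedComponents n D J), (-1:ℝ)^((I \ J).card)) *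
              ((∑ p ∈ WJ n D U K, w p) - (((WJ n D U K).card : ℝ) - 1) * zn) :=
          swap_sum I.powerset I.powerset (fun J => nestedComponents n D J) hSsub
            (fun J => (-1:ℝ)^((I \ J).card))
            (fun K => (∑ p ∈ WJ n D U K, w p) - (((WJ n D U K).card : ℝ) - 1) * zn)
      _ = ∑ K ∈ I.powerset,
            (if IsNested n D K ∧ ∀ i ∈ I, aI D K ≤ i ∧ i ≤ bI n D K
              then (-1:ℝ)^((I \ K).card) else 0) *
              ((∑ p ∈ WJ n D U K, w p) - (((WJ n D U K).card : ℝ) - 1) * zn) := by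
          apply Finset.sum_congr rfl
          intro K hK
          rw [stepD K hK]
      _ = ∑ K ∈ I.powerset.filter (fun K => IsNested n D K ∧ ∀ i ∈ I, aI D K ≤ i ∧ i ≤ bI n D K),
            (-1:ℝ)^((I \ K).card) *
              ((∑ p ∈ WJ n D U K, w p) - (((WJ n D U K).card : ℝ) - 1) * zn) := by
          rw [Finset.sum_filter]
          apply Finset.sum_congr rfl
          intro K _
          rw [ite_mul, zero_mul]
      _ = _ := by rw [hFeq]
  -- nestedness of members
  have hKmem : ∀ K ∈ I.powerset.filter (fun K => M ⊆ K), IsNested n D K := by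
    intro K hK
    rw [← hFeq] at hK
    exact (Finset.mem_filter.mp hK).2.1
  have hxyfacts : ∀ x y : ℕ, (x = a ∨ x = γ) → (y = Γ ∨ y = b) →
      x ≤ γ ∧ Γ ≤ y ∧ x < y ∧ y ≤ n + 1 := by
    intro x y hx hy
    rcases hx with rfl|rfl <;> rcases hy with rfl|rfl <;>
      exact ⟨by omega, by omega, by omega, by omega⟩
  have hC1 : ∀ x y : ℕ, (x = a ∨ x = γ) → (y = Γ ∨ y = b) →
      (∀ d ∈ D, x < d → d < y → d ∈ I) ∧ (x ∈ U → x ∈ I) ∧ (y ∈ U → y ∈ I) := by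
    intro x y hx hy
    obtain ⟨hxγ, hΓy, hxy, hyn⟩ := hxyfacts x y hx hy
    refine ⟨?_, ?_, ?_⟩
    · intro d hd hxd hdy
      apply hnst d hd
      · rcases hx with rfl|rfl
        · exact hxd
        · omega
      · rcases hy with rfl|rfl
        · omega
        · exact hdy
    · intro hxUm
      rcases hx with rfl|rfl
      · exact absurd hxUm haU
      · exact hγI
    · intro hyUm
      rcases hy with rfl|rfl
      · exact hΓI
      · exact absurd hyUm hbU
  have hC2 : ∀ x y : ℕ, (x = a ∨ x = γ) → (y = Γ ∨ y = b) →
      (M ∪ Af (x, y)) ∪ Bf (x, y) = I := by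
    intro x y hx hy
    obtain ⟨hxγ, hΓy, hxy, hyn⟩ := hxyfacts x y hx hy
    apply Finset.Subset.antisymm
    · refine Finset.union_subset (Finset.union_subset ?_ ?_) ?_
      · rw [hM_def]; exact Finset.filter_subset _ _
      · rw [hAf_def]; exact Finset.filter_subset _ _
      · rw [hBf_def]; exact Finset.filter_subset _ _
    · intro i hi
      simp only [hM_def, hAf_def, hBf_def, Finset.mem_union, Finset.mem_filter]
      have hγi := hγle i hi
      have hiΓ := hleΓ i hi
      have hai := ha_lt i hi
      have hib := hlt_b i hi
      rcases hDorU i hi with hiD|hiU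
      · by_cases hiγ : i = γ
        · rcases hx with rfl|rfl
          · left; right; exact ⟨hi, Or.inl ⟨hiD, by omega, by omega⟩⟩
          · right; exact ⟨hi, Or.inr ⟨hiD, Or.inl (by omega)⟩⟩
        · by_cases hiΓ' : i = Γ
          · rcases hy with rfl|rfl
            · right; exact ⟨hi, Or.inr ⟨hiD, Or.inr (by omega)⟩⟩
            · left; right; exact ⟨hi, Or.inl ⟨hiD, by omega, by omega⟩⟩
          · left; left; exact ⟨hi, hiD, hiγ, hiΓ'⟩
      · by_cases hix : i = x
        · left; right; exact ⟨hi, Or.inr ⟨hiU, Or.inl hix⟩⟩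
        · by_cases hiy : i = y
          · left; right; exact ⟨hi, Or.inr ⟨hiU, Or.inr hiy⟩⟩
          · right; exact ⟨hi, Or.inl ⟨hiU, by omega, by omega⟩⟩
  have hC3 : ∀ x y : ℕ, (x = a ∨ x = γ) → (y = Γ ∨ y = b) →
      Disjoint (M ∪ Af (x, y)) (Bf (x, y)) := by
    intro x y hx hy
    obtain ⟨hxγ, hΓy, hxy, hyn⟩ := hxyfacts x y hx hy
    rw [Finset.disjoint_left]
    intro i hiMA hiB
    simp only [hM_def, hAf_def, Finset.mem_union, Finset.mem_filter] at hiMA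
    simp only [hBf_def, Finset.mem_filter] at hiB
    obtain ⟨hiI, hiB'⟩ := hiB
    have hai := ha_lt i hiI
    have hib := hlt_b i hiI
    have hγi := hγle i hiI
    have hiΓ := hleΓ i hiI
    rcases hiB' with ⟨hiU, hxi, hiy⟩|⟨hiD, hieq⟩
    · rcases hiMA with ⟨-, hiD, -, -⟩|⟨-, h'⟩
      · exact hdisj' hiD hiU
      · rcases h' with ⟨hiD, -⟩|⟨-, hieq⟩
        · exact hdisj' hiD hiU
        · rcases hieq with rfl|rfl <;> omega
    · rcases hiMA with ⟨-, -, hiγ, hiΓ'⟩|⟨-, h'⟩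
      · rcases hieq with rfl|rfl <;> omega
      · rcases h' with ⟨-, hxi, hiy⟩|⟨hiU, -⟩
        · rcases hieq with rfl|rfl <;> omega
        · exact hdisj' hiD hiU
  have hCase : ∀ x y : ℕ, IsProper n D U x y →
      ((∀ d ∈ D, x < d → d < y → d ∈ I) ∧ (x ∈ U → x ∈ I) ∧ (y ∈ U → y ∈ I)) →
      (M ∪ Af (x, y)) ∪ Bf (x, y) = I →
      (x = a ∨ x = γ) ∧ (y = Γ ∨ y = b) := by
    intro x y hprop hFix hU
    obtain ⟨hxy, hyn1, -⟩ := hprop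
    obtain ⟨hF1, hF2, hF3⟩ := hFix
    have hγc : (x < γ ∧ γ < y) ∨ γ = x ∨ γ = y := by
      have hm : γ ∈ (M ∪ Af (x, y)) ∪ Bf (x, y) := hU.symm ▸ hγI
      simp only [hM_def, hAf_def, hBf_def, Finset.mem_union, Finset.mem_filter] at hm
      rcases hm with (⟨-, -, hne, -⟩|⟨-, ⟨-, h1', h2'⟩|⟨-, heq⟩⟩)|⟨-, ⟨-, h1', h2'⟩|⟨-, heq⟩⟩
      · exact absurd rfl hne
      · exact Or.inl ⟨h1', h2'⟩
      · exact Or.inr heq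
      · exact Or.inl ⟨h1', h2'⟩
      · exact Or.inr heq
    have hΓc : (x < Γ ∧ Γ < y) ∨ Γ = x ∨ Γ = y := by
      have hm : Γ ∈ (M ∪ Af (x, y)) ∪ Bf (x, y) := hU.symm ▸ hΓI
      simp only [hM_def, hAf_def, hBf_def, Finset.mem_union, Finset.mem_filter] at hm
      rcases hm with (⟨-, -, -, hne⟩|⟨-, ⟨-, h1', h2'⟩|⟨-, heq⟩⟩)|⟨-, ⟨-, h1', h2'⟩|⟨-, heq⟩⟩
      · exact absurd rfl hne
      · exact Or.inl ⟨h1', h2'⟩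
      · exact Or.inr heq
      · exact Or.inl ⟨h1', h2'⟩
      · exact Or.inr heq
    have hxγ : x ≤ γ ∧ γ < y := by
      rcases hγc with ⟨h1', h2'⟩|heq|heq
      · exact ⟨le_of_lt h1', h2'⟩
      · omega
      · exfalso
        rcases hΓc with ⟨h1', h2'⟩|heq'|heq' <;> omega
    have hΓy : Γ ≤ y ∧ x < Γ := by
      rcases hΓc with ⟨h1', h2'⟩|heq|heq
      · exact ⟨le_of_lt h2', h1'⟩
      · exfalso; omega
      · omega
    constructor
    · by_cases hxlt : x < γ
      · left
        by_cases hxUm : x ∈ U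
        · exfalso
          have := hγle x (hF2 hxUm)
          omega
        · rcases lt_trichotomy x a with h|h|h
          · exfalso
            have haD : a ∈ D := by
              rcases Finset.mem_insert.mp (aI_mem D I hIcc1) with h0|hD
              · exfalso; omega
              · exact hD
            have haI : a ∈ I := hF1 a haD h (by omega)
            have := ha_lt a haI
            omega
          · exact h
          · exfalso
            have hxD : x ∈ D := by
              rcases mem_D_or_U (i := x) hDU (by omega) (by omega) with h'|h'
              · exact h'
              · exact absurd h' hxUm
            have hxI : x ∈ I := hnst x hxD h (by omega)
            have := hγle x hxI
            omega
      · right; omega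
    · by_cases hylt : Γ < y
      · right
        by_cases hyUm : y ∈ U
        · exfalso
          have := hleΓ y (hF3 hyUm)
          omega
        · rcases lt_trichotomy y b with h|h|h
          · exfalso
            have hyD : y ∈ D := by
              rcases mem_D_or_U (i := y) hDU (by omega) (by omega) with h'|h'
              · exact h'
              · exact absurd h' hyUm
            have hyI : y ∈ I := hnst y hyD (by omega) h
            have := hleΓ y hyI
            omega
          · exact h
          · exfalso
            have hbD : b ∈ D := by
              rcases Finset.mem_insert.mp (bI_spec D I hIccn).1 with h0|hD
              · exfalso; omega
              · exact hD
            have hbI : b ∈ I := hF1 b hbD (by omega) h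
            have := hlt_b b hbI
            omega
      · left; omega
  -- the total coefficient of each proper diagonal
  have master : ∀ x y : ℕ, IsProper n D U x y →
      (∑ K ∈ (I.powerset.filter (fun K => M ⊆ K)).filter (fun K => (x, y) ∈ WJ n D U K),
        (-1:ℝ)^((I \ K).card))
      = if (x = a ∨ x = γ) ∧ (y = Γ ∨ y = b) then (-1:ℝ)^((Bf (x, y)).card) else 0 := by
    intro x y hprop
    have hfil1 : ((I.powerset.filter (fun K => M ⊆ K)).filter (fun K => (x, y) ∈ WJ n D U K))
        = I.powerset.filter (fun K => M ⊆ K ∧ Pred D U x y K) := by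
      rw [Finset.filter_filter]
      apply Finset.filter_congr
      intro K hK
      constructor
      · rintro ⟨hMK, hW⟩
        have hKn : IsNested n D K := hKmem K (Finset.mem_filter.mpr ⟨hK, hMK⟩)
        rw [WJ_eq hDU hdisj hKn] at hW
        exact ⟨hMK, (Finset.mem_filter.mp hW).2.1⟩
      · rintro ⟨hMK, hq⟩
        have hKn : IsNested n D K := hKmem K (Finset.mem_filter.mpr ⟨hK, hMK⟩)
        refine ⟨hMK, ?_⟩
        rw [WJ_eq hDU hdisj hKn]
        refine Finset.mem_filter.mpr ⟨?_, hq, hprop⟩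
        have hp1 := hprop.1
        have hp2 := hprop.2.1
        exact Finset.mem_product.mpr
          ⟨Finset.mem_range.mpr (by omega), Finset.mem_range.mpr (by omega)⟩
    rw [hfil1]
    by_cases hFix : (∀ d ∈ D, x < d → d < y → d ∈ I) ∧ (x ∈ U → x ∈ I) ∧ (y ∈ U → y ∈ I)
    · have hfil2 : I.powerset.filter (fun K => M ⊆ K ∧ Pred D U x y K)
          = I.powerset.filter (fun K => (M ∪ Af (x, y)) ⊆ K ∧ Disjoint K (Bf (x, y))) := by
        apply Finset.filter_congr
        intro K hK
        have hKI : K ⊆ I := Finset.mem_powerset.mp hK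
        constructor
        · rintro ⟨hMK, hq1, hq2, hq3, hq4, hq5, hq6⟩
          constructor
          · apply Finset.union_subset hMK
            rw [hAf_def]
            intro i hi
            simp only [Finset.mem_filter] at hi
            rcases hi.2 with ⟨hiD, hxi, hiy⟩|⟨hiU, hieq⟩
            · exact hq1 i hiD hxi hiy
            · rcases hieq with rfl|rfl
              · exact hq2 hiU
              · exact hq3 hiU
          · rw [Finset.disjoint_left]
            intro i hiK hiB
            rw [hBf_def] at hiB
            simp only [Finset.mem_filter] at hiB
            rcases hiB.2 with ⟨hiU, hxi, hiy⟩|⟨hiD, hieq⟩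
            · exact hq4 i hiK hiU ⟨hxi, hiy⟩
            · rcases hieq with rfl|rfl
              · exact hq5 hiD hiK
              · exact hq6 hiD hiK
        · rintro ⟨hAK, hdisjK⟩
          have hMK : M ⊆ K := (Finset.subset_union_left).trans hAK
          have hAfK : Af (x, y) ⊆ K := (Finset.subset_union_right).trans hAK
          refine ⟨hMK, ?_, ?_, ?_, ?_, ?_, ?_⟩
          · intro d hd hxd hdy
            apply hAfK
            rw [hAf_def]
            exact Finset.mem_filter.mpr ⟨hFix.1 d hd hxd hdy, Or.inl ⟨hd, hxd, hdy⟩⟩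
          · intro hxUm
            apply hAfK
            rw [hAf_def]
            exact Finset.mem_filter.mpr ⟨hFix.2.1 hxUm, Or.inr ⟨hxUm, Or.inl rfl⟩⟩
          · intro hyUm
            apply hAfK
            rw [hAf_def]
            exact Finset.mem_filter.mpr ⟨hFix.2.2 hyUm, Or.inr ⟨hyUm, Or.inr rfl⟩⟩
          · rintro u huK huU ⟨hxu, huy⟩
            apply Finset.disjoint_left.mp hdisjK huK
            rw [hBf_def]
            exact Finset.mem_filter.mpr ⟨hKI huK, Or.inl ⟨huU, hxu, huy⟩⟩
          · intro hxD hxK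
            apply Finset.disjoint_left.mp hdisjK hxK
            rw [hBf_def]
            exact Finset.mem_filter.mpr ⟨hKI hxK, Or.inr ⟨hxD, Or.inl rfl⟩⟩
          · intro hyD hyK
            apply Finset.disjoint_left.mp hdisjK hyK
            rw [hBf_def]
            exact Finset.mem_filter.mpr ⟨hKI hyK, Or.inr ⟨hyD, Or.inr rfl⟩⟩
      rw [hfil2]
      have hMI : M ∪ Af (x, y) ⊆ I := by
        rw [hM_def, hAf_def]
        exact Finset.union_subset (Finset.filter_subset _ _) (Finset.filter_subset _ _)
      have hBI : Bf (x, y) ⊆ I := by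
        rw [hBf_def]
        exact Finset.filter_subset _ _
      rw [interval_sum I (M ∪ Af (x, y)) (Bf (x, y)) hMI hBI]
      by_cases hfour : (x = a ∨ x = γ) ∧ (y = Γ ∨ y = b)
      · rw [if_pos ⟨hC2 x y hfour.1 hfour.2, hC3 x y hfour.1 hfour.2⟩, if_pos hfour]
      · rw [if_neg, if_neg hfour]
        rintro ⟨hu', -⟩
        exact hfour (hCase x y hprop hFix hu')
    · have hempty : I.powerset.filter (fun K => M ⊆ K ∧ Pred D U x y K) = ∅ := by
        apply Finset.filter_false_of_mem
        rintro K hK ⟨hMK, hq1, hq2, hq3, -, -, -⟩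
        apply hFix
        have hKI : K ⊆ I := Finset.mem_powerset.mp hK
        exact ⟨fun d hd h1' h2' => hKI (hq1 d hd h1' h2'),
          fun h => hKI (hq2 h), fun h => hKI (hq3 h)⟩
      rw [hempty, Finset.sum_empty, if_neg]
      intro hfour
      exact hFix (hC1 x y hfour.1 hfour.2)
  -- sum of signs over the family vanishes
  have hzero : (∑ K ∈ I.powerset.filter (fun K => M ⊆ K), (-1:ℝ)^((I \ K).card)) = 0 := by
    have hcongr : I.powerset.filter (fun K => M ⊆ K)
        = I.powerset.filter (fun K => M ⊆ K ∧ Disjoint K (∅ : Finset ℕ)) := by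
      apply Finset.filter_congr
      intro K _
      simp
    rw [hcongr,
      interval_sum I M ∅ (by rw [hM_def]; exact Finset.filter_subset _ _) (Finset.empty_subset I)]
    rw [if_neg]
    rintro ⟨hu, -⟩
    rw [Finset.union_empty] at hu
    have hγM : γ ∈ M := hu.symm ▸ hγI
    rw [hM_def] at hγM
    exact (Finset.mem_filter.mp hγM).2.2.1 rfl
  -- identification of B with I \ R
  have hBeq : ∀ x y : ℕ, (x = a ∨ x = γ) → (y = Γ ∨ y = b) →
      Bf (x, y) = I \ Rdiag n D U x y := by
    intro x y hx hy
    have hxγ : x ≤ γ := by rcases hx with rfl|rfl <;> omega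
    have hΓy : Γ ≤ y := by rcases hy with rfl|rfl <;> omega
    ext i
    rw [hBf_def]
    simp only [Finset.mem_filter, Finset.mem_sdiff]
    by_cases hiI : i ∈ I
    case neg =>
      constructor
      · rintro ⟨h, -⟩
        exact absurd h hiI
      · rintro ⟨h, -⟩
        exact absurd h hiI
    case pos =>
      have hγi := hγle i hiI
      have hiΓ := hleΓ i hiI
      have hai := ha_lt i hiI
      have hib := hlt_b i hiI
      simp only [hiI, true_and]
      simp only [Rdiag]
      by_cases hxUm : x ∈ U <;> by_cases hyUm : y ∈ U
      · rw [if_pos hxUm, if_pos hyUm]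
        simp only [Finset.mem_union, Finset.mem_filter]
        rcases hDorU i hiI with hiD|hiU
        · constructor
          · rintro (⟨hiU', -⟩|⟨hiD', hieq⟩)
            · exact (hdisj' hiD hiU').elim
            · rcases hieq with rfl|rfl
              · exact (hdisj' hiD' hxUm).elim
              · exact (hdisj' hiD' hyUm).elim
          · intro hcon
            exact (hcon (Or.inl (Or.inl hiD))).elim
        · constructor
          · rintro (⟨-, hxi, hiy⟩|⟨hiD', -⟩)
            · rintro ((h'|⟨-, h'⟩)|⟨-, h'⟩)
              · exact hdisj' h' hiU
              · omega
              · omega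
            · exact (hdisj' hiD' hiU).elim
          · intro hcon
            have hc1 : ¬(i ≤ x) := fun h => hcon (Or.inl (Or.inr ⟨hiU, h⟩))
            have hc2 : ¬(y ≤ i) := fun h => hcon (Or.inr ⟨hiU, h⟩)
            exact Or.inl ⟨hiU, by omega, by omega⟩
      · rw [if_pos hxUm, if_neg hyUm]
        simp only [Finset.mem_union, Finset.mem_filter]
        rcases hDorU i hiI with hiD|hiU
        · have hiy' : i ≤ y := by omega
          have hiny : i ≠ x := fun h => hdisj' hiD (h ▸ hxUm)
          constructor
          · rintro (⟨hiU', -⟩|⟨hiD', hieq⟩)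
            · exact (hdisj' hiD hiU').elim
            · rcases hieq with rfl|rfl
              · exact (hdisj' hiD' hxUm).elim
              · rintro (⟨-, h'⟩|⟨h', -⟩)
                · omega
                · exact hdisj' hiD h'
          · intro hcon
            have hc1 : ¬(i < y) := fun h => hcon (Or.inl ⟨hiD, h⟩)
            exact Or.inr ⟨hiD, Or.inr (by omega)⟩
        · have hiny : i ≠ y := fun h => hyUm (h ▸ hiU)
          constructor
          · rintro (⟨-, hxi, hiy⟩|⟨hiD', -⟩)
            · rintro (⟨h', -⟩|⟨-, h'⟩)
              · exact hdisj' h' hiU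
              · omega
            · exact (hdisj' hiD' hiU).elim
          · intro hcon
            have hc1 : ¬(i ≤ x) := fun h => hcon (Or.inr ⟨hiU, h⟩)
            exact Or.inl ⟨hiU, by omega, by omega⟩
      · rw [if_neg hxUm, if_pos hyUm]
        simp only [Finset.mem_union, Finset.mem_filter]
        rcases hDorU i hiI with hiD|hiU
        · have hix' : x ≤ i := by omega
          have hiny : i ≠ y := fun h => hdisj' hiD (h ▸ hyUm)
          constructor
          · rintro (⟨hiU', -⟩|⟨hiD', hieq⟩)
            · exact (hdisj' hiD hiU').elim
            · rcases hieq with rfl|rfl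
              · rintro (⟨-, h'⟩|⟨h', -⟩)
                · omega
                · exact hdisj' hiD h'
              · exact (hdisj' hiD' hyUm).elim
          · intro hcon
            have hc1 : ¬(x < i) := fun h => hcon (Or.inl ⟨hiD, h⟩)
            exact Or.inr ⟨hiD, Or.inl (by omega)⟩
        · have hinx : i ≠ x := fun h => hxUm (h ▸ hiU)
          constructor
          · rintro (⟨-, hxi, hiy⟩|⟨hiD', -⟩)
            · rintro (⟨h', -⟩|⟨-, h'⟩)
              · exact hdisj' h' hiU
              · omega
            · exact (hdisj' hiD' hiU).elim
          · intro hcon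
            have hc1 : ¬(y ≤ i) := fun h => hcon (Or.inr ⟨hiU, h⟩)
            exact Or.inl ⟨hiU, by omega, by omega⟩
      · rw [if_neg hxUm, if_neg hyUm]
        simp only [Finset.mem_filter]
        rcases hDorU i hiI with hiD|hiU
        · have hix' : x ≤ i := by omega
          have hiy' : i ≤ y := by omega
          constructor
          · rintro (⟨hiU', -⟩|⟨hiD', hieq⟩)
            · exact (hdisj' hiD hiU').elim
            · rintro ⟨-, h1', h2'⟩
              rcases hieq with rfl|rfl
              · omega
              · omega
          · intro hcon
            have hc1 : ¬(x < i ∧ i < y) := fun h => hcon ⟨hiD, h⟩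
            right
            refine ⟨hiD, ?_⟩
            omega
        · have hinx : i ≠ x := fun h => hxUm (h ▸ hiU)
          have hiny : i ≠ y := fun h => hyUm (h ▸ hiU)
          constructor
          · rintro (⟨-, -, -⟩|⟨hiD', -⟩)
            · rintro ⟨h', -⟩
              exact hdisj' h' hiU
            · exact (hdisj' hiD' hiU).elim
          · intro hcon
            exact Or.inl ⟨hiU, by omega, by omega⟩
  -- sign relations
  have hrel1 : ∀ x : ℕ, x = a ∨ x = γ →
      (-1:ℝ)^((Bf (x, Γ)).card) = -(-1:ℝ)^((Bf (x, b)).card) := by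
    intro x hx
    have hxγ : x ≤ γ := by rcases hx with rfl|rfl <;> omega
    by_cases hΓD : Γ ∈ D
    · have hins : Bf (x, Γ) = insert Γ (Bf (x, b)) := by
        ext i
        rw [hBf_def]
        simp only [Finset.mem_filter, Finset.mem_insert]
        constructor
        · rintro ⟨hiI, ⟨hiU, hxi, hiΓ'⟩|⟨hiD, hieq⟩⟩
          · right; exact ⟨hiI, Or.inl ⟨hiU, hxi, hlt_b i hiI⟩⟩
          · rcases hieq with rfl|rfl
            · right; exact ⟨hiI, Or.inr ⟨hiD, Or.inl rfl⟩⟩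
            · left; rfl
        · rintro (rfl|⟨hiI, ⟨hiU, hxi, hib'⟩|⟨hiD, hieq⟩⟩)
          · exact ⟨hΓI, Or.inr ⟨hΓD, Or.inr rfl⟩⟩
          · refine ⟨hiI, Or.inl ⟨hiU, hxi, ?_⟩⟩
            have h1' := hleΓ i hiI
            have h2' : i ≠ Γ := fun h => hdisj' hΓD (h ▸ hiU)
            omega
          · rcases hieq with rfl|rfl
            · exact ⟨hiI, Or.inr ⟨hiD, Or.inl rfl⟩⟩
            · exact absurd (hlt_b _ hiI) (lt_irrefl _)
      have hnot : Γ ∉ Bf (x, b) := by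
        rw [hBf_def]
        simp only [Finset.mem_filter]
        rintro ⟨-, ⟨hΓU, -, -⟩|⟨-, hieq⟩⟩
        · exact hdisj' hΓD hΓU
        · rcases hieq with h|h <;> omega
      rw [hins, Finset.card_insert_of_notMem hnot, pow_succ]
      ring
    · have hΓU : Γ ∈ U := by
        rcases hDorU Γ hΓI with h|h
        · exact absurd h hΓD
        · exact h
      have hins : Bf (x, b) = insert Γ (Bf (x, Γ)) := by
        ext i
        rw [hBf_def]
        simp only [Finset.mem_filter, Finset.mem_insert]
        constructor
        · rintro ⟨hiI, ⟨hiU, hxi, hib'⟩|⟨hiD, hieq⟩⟩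
          · by_cases hiΓ' : i = Γ
            · left; exact hiΓ'
            · right
              refine ⟨hiI, Or.inl ⟨hiU, hxi, ?_⟩⟩
              have := hleΓ i hiI
              omega
          · rcases hieq with rfl|rfl
            · right; exact ⟨hiI, Or.inr ⟨hiD, Or.inl rfl⟩⟩
            · exact absurd (hlt_b _ hiI) (lt_irrefl _)
        · rintro (rfl|⟨hiI, ⟨hiU, hxi, hiΓ'⟩|⟨hiD, hieq⟩⟩)
          · exact ⟨hΓI, Or.inl ⟨hΓU, by omega, hlt_b Γ hΓI⟩⟩
          · exact ⟨hiI, Or.inl ⟨hiU, hxi, hlt_b i hiI⟩⟩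
          · rcases hieq with rfl|rfl
            · exact ⟨hiI, Or.inr ⟨hiD, Or.inl rfl⟩⟩
            · exact (hdisj' hiD hΓU).elim
      have hnot : Γ ∉ Bf (x, Γ) := by
        rw [hBf_def]
        simp only [Finset.mem_filter]
        rintro ⟨-, ⟨-, -, hcon⟩|⟨hΓD', -⟩⟩
        · omega
        · exact hdisj' hΓD' hΓU
      rw [hins, Finset.card_insert_of_notMem hnot, pow_succ]
      ring
  have hrel2 : ∀ y : ℕ, y = Γ ∨ y = b →
      (-1:ℝ)^((Bf (γ, y)).card) = -(-1:ℝ)^((Bf (a, y)).card) := by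
    intro y hy
    have hΓy : Γ ≤ y := by rcases hy with rfl|rfl <;> omega
    by_cases hγD : γ ∈ D
    · have hins : Bf (γ, y) = insert γ (Bf (a, y)) := by
        ext i
        rw [hBf_def]
        simp only [Finset.mem_filter, Finset.mem_insert]
        constructor
        · rintro ⟨hiI, ⟨hiU, hγi', hiy⟩|⟨hiD, hieq⟩⟩
          · right; exact ⟨hiI, Or.inl ⟨hiU, ha_lt i hiI, hiy⟩⟩
          · rcases hieq with rfl|rfl
            · left; rfl
            · right; exact ⟨hiI, Or.inr ⟨hiD, Or.inr rfl⟩⟩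
        · rintro (rfl|⟨hiI, ⟨hiU, hai', hiy⟩|⟨hiD, hieq⟩⟩)
          · exact ⟨hγI, Or.inr ⟨hγD, Or.inl rfl⟩⟩
          · refine ⟨hiI, Or.inl ⟨hiU, ?_, hiy⟩⟩
            have h1' := hγle i hiI
            have h2' : i ≠ γ := fun h => hdisj' hγD (h ▸ hiU)
            omega
          · rcases hieq with rfl|rfl
            · exact absurd (ha_lt _ hiI) (lt_irrefl _)
            · exact ⟨hiI, Or.inr ⟨hiD, Or.inr rfl⟩⟩
      have hnot : γ ∉ Bf (a, y) := by
        rw [hBf_def]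
        simp only [Finset.mem_filter]
        rintro ⟨-, ⟨hγU, -, -⟩|⟨-, hieq⟩⟩
        · exact hdisj' hγD hγU
        · rcases hieq with h|h <;> omega
      rw [hins, Finset.card_insert_of_notMem hnot, pow_succ]
      ring
    · have hγU : γ ∈ U := by
        rcases hDorU γ hγI with h|h
        · exact absurd h hγD
        · exact h
      have hins : Bf (a, y) = insert γ (Bf (γ, y)) := by
        ext i
        rw [hBf_def]
        simp only [Finset.mem_filter, Finset.mem_insert]
        constructor
        · rintro ⟨hiI, ⟨hiU, hai', hiy⟩|⟨hiD, hieq⟩⟩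
          · by_cases hiγ' : i = γ
            · left; exact hiγ'
            · right
              refine ⟨hiI, Or.inl ⟨hiU, ?_, hiy⟩⟩
              have := hγle i hiI
              omega
          · rcases hieq with rfl|rfl
            · exact absurd (ha_lt _ hiI) (lt_irrefl _)
            · right; exact ⟨hiI, Or.inr ⟨hiD, Or.inr rfl⟩⟩
        · rintro (rfl|⟨hiI, ⟨hiU, hγi', hiy⟩|⟨hiD, hieq⟩⟩)
          · exact ⟨hγI, Or.inl ⟨hγU, ha_lt γ hγI, by omega⟩⟩
          · exact ⟨hiI, Or.inl ⟨hiU, ha_lt i hiI, hiy⟩⟩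
          · rcases hieq with rfl|rfl
            · exact (hdisj' hiD hγU).elim
            · exact ⟨hiI, Or.inr ⟨hiD, Or.inr rfl⟩⟩
      have hnot : γ ∉ Bf (γ, y) := by
        rw [hBf_def]
        simp only [Finset.mem_filter]
        rintro ⟨-, ⟨-, hcon, -⟩|⟨hγD', -⟩⟩
        · omega
        · exact hdisj' hγD' hγU
      rw [hins, Finset.card_insert_of_notMem hnot, pow_succ]
      ring
  -- assemble
  set FM := I.powerset.filter (fun K => M ⊆ K) with hFM_def
  set P2 := Finset.range (n+2) ×ˢ Finset.range (n+2) with hP2_def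
  have hWsub : ∀ K ∈ FM, WJ n D U K ⊆ P2 := fun K _ => Finset.filter_subset _ _
  have step2 : yI n D U w zn I
      = ∑ K ∈ FM, (-1:ℝ)^((I \ K).card) * (∑ p ∈ WJ n D U K, (w p - zn))
        + (∑ K ∈ FM, (-1:ℝ)^((I \ K).card)) * zn := by
    rw [stepE, Finset.sum_mul, ← Finset.sum_add_distrib]
    apply Finset.sum_congr rfl
    intro K _
    have hsplit : (∑ p ∈ WJ n D U K, w p) - (((WJ n D U K).card : ℝ) - 1) * zn
        = (∑ p ∈ WJ n D U K, (w p - zn)) + zn := by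
      rw [Finset.sum_sub_distrib, Finset.sum_const, nsmul_eq_mul]
      ring
    rw [hsplit, mul_add]
  rw [step2, hzero, zero_mul, add_zero]
  rw [swap_sum FM P2 (fun K => WJ n D U K) hWsub
    (fun K => (-1:ℝ)^((I \ K).card)) (fun p => w p - zn)]
  have hmemP2 : ∀ x y : ℕ, x ≤ n + 1 → y ≤ n + 1 → ((x, y) : ℕ × ℕ) ∈ P2 := by
    intro x y hx hy
    rw [hP2_def, Finset.mem_product]
    constructor <;> simp [Finset.mem_range] <;> omega
  set T4 : Finset (ℕ × ℕ) := insert (a, b) (insert (a, Γ) (insert (γ, b) {(γ, Γ)})) with hT4_def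
  have hT4sub : T4 ⊆ P2 := by
    intro p hp
    rw [hT4_def] at hp
    simp only [Finset.mem_insert, Finset.mem_singleton] at hp
    rcases hp with rfl|rfl|rfl|rfl <;> exact hmemP2 _ _ (by omega) (by omega)
  have hT4iff : ∀ p : ℕ × ℕ, p ∈ T4 ↔ (p.1 = a ∨ p.1 = γ) ∧ (p.2 = Γ ∨ p.2 = b) := by
    intro p
    rw [hT4_def]
    simp only [Finset.mem_insert, Finset.mem_singleton, Prod.ext_iff]
    constructor
    · rintro (⟨h1', h2'⟩|⟨h1', h2'⟩|⟨h1', h2'⟩|⟨h1', h2'⟩) <;> omega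
    · rintro ⟨h1'|h1', h2'|h2'⟩ <;> omega
  have hvanish : ∀ p ∈ P2, p ∉ T4 →
      (∑ K ∈ FM.filter (fun K => p ∈ WJ n D U K), (-1:ℝ)^((I \ K).card)) * (w p - zn) = 0 := by
    intro p hp hpT4
    by_cases hprop : IsProper n D U p.1 p.2
    · have hm := master p.1 p.2 hprop
      have hpe : ((p.1, p.2) : ℕ × ℕ) = p := rfl
      rw [hpe] at hm
      rw [hm, if_neg, zero_mul]
      intro hcon
      exact hpT4 ((hT4iff p).mpr hcon)
    · have : FM.filter (fun K => p ∈ WJ n D U K) = ∅ := by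
        apply Finset.filter_false_of_mem
        intro K _ hcon
        exact hprop (Finset.mem_filter.mp hcon).2.2
      rw [this, Finset.sum_empty, zero_mul]
  rw [← Finset.sum_subset hT4sub hvanish]
  have hd12 : ((a, b) : ℕ × ℕ) ≠ (a, Γ) := by simp [Prod.ext_iff]; omega
  have hd13 : ((a, b) : ℕ × ℕ) ≠ (γ, b) := by simp [Prod.ext_iff]; omega
  have hd14 : ((a, b) : ℕ × ℕ) ≠ (γ, Γ) := by simp [Prod.ext_iff]; omega
  have hd23 : ((a, Γ) : ℕ × ℕ) ≠ (γ, b) := by simp [Prod.ext_iff]; omega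
  have hd24 : ((a, Γ) : ℕ × ℕ) ≠ (γ, Γ) := by simp [Prod.ext_iff]; omega
  have hd34 : ((γ, b) : ℕ × ℕ) ≠ (γ, Γ) := by simp [Prod.ext_iff]; omega
  have hnm1 : ((a, b) : ℕ × ℕ) ∉ insert (a, Γ) (insert (γ, b) ({(γ, Γ)} : Finset (ℕ × ℕ))) := by
    simp only [Finset.mem_insert, Finset.mem_singleton]
    push_neg
    exact ⟨hd12, hd13, hd14⟩
  have hnm2 : ((a, Γ) : ℕ × ℕ) ∉ insert (γ, b) ({(γ, Γ)} : Finset (ℕ × ℕ)) := by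
    simp only [Finset.mem_insert, Finset.mem_singleton]
    push_neg
    exact ⟨hd23, hd24⟩
  have hnm3 : ((γ, b) : ℕ × ℕ) ∉ ({(γ, Γ)} : Finset (ℕ × ℕ)) := by
    simp only [Finset.mem_singleton]
    exact hd34
  rw [hT4_def]
  rw [Finset.sum_insert hnm1, Finset.sum_insert hnm2, Finset.sum_insert hnm3, Finset.sum_singleton]
  have hv1 := master a b h1
  have hv2 := master a Γ h2
  have hv3 := master γ b h3
  have hv4 := master γ Γ h4
  rw [if_pos ⟨Or.inl rfl, Or.inr rfl⟩] at hv1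
  rw [if_pos ⟨Or.inl rfl, Or.inl rfl⟩] at hv2
  rw [if_pos ⟨Or.inr rfl, Or.inr rfl⟩] at hv3
  rw [if_pos ⟨Or.inr rfl, Or.inl rfl⟩] at hv4
  rw [hv1, hv2, hv3, hv4]
  rw [← hBeq a b (Or.inl rfl) (Or.inr rfl), ← hBeq a Γ (Or.inl rfl) (Or.inl rfl),
    ← hBeq γ b (Or.inr rfl) (Or.inr rfl), ← hBeq γ Γ (Or.inr rfl) (Or.inl rfl)]
  rw [hrel1 a (Or.inl rfl), hrel1 γ (Or.inr rfl), hrel2 b (Or.inr rfl)]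
  ring


end AssocPaper
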